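/- Assume l is twice continuously differentiable. Then for every ψ: γ′₁(ψ)γ″₂(ψ) − γ′₂(ψ)γ″₁(ψ) = −l′(ψ)², and hence for every ψ with l′(ψ) > 0 the unsigned curvature |γ′₁γ″₂ − γ′₂γ″₁| / ‖γ′‖³ of the basic curve γ at ψ equals 1/l′(ψ); that is, the radius of curvature of the basic curve equals l′(ψ). -/

import Mathlib

open Real

/-- Equation (9) of the paper: Cartesian coordinates as functions of the
coordinates `(R, ψ)` built from the tangent rays of a basic curve. -/
noncomputable def F (l : ℝ → ℝ) (p : ℝ × ℝ) : ℝ × ℝ :=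
  (p.1 * Real.sin p.2 - ∫ t in (0:ℝ)..p.2, l t * Real.cos t,
   p.1 * Real.cos p.2 + ∫ t in (0:ℝ)..p.2, l t * Real.sin t)

/-- The basic curve of the coordinate system. -/
noncomputable def γ (l : ℝ → ℝ) (ψ : ℝ) : ℝ × ℝ := F l (l ψ, ψ)

lemma hd1 {l : ℝ → ℝ} (hl : ContDiff ℝ 2 l) (x : ℝ) :
    HasDerivAt (fun s => (γ l s).1) (deriv l x * Real.sin x) x := by
  have hdl : HasDerivAt l (deriv l x) x :=
    (hl.differentiable (by norm_num)).differentiableAt.hasDerivAt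
  have h1 : HasDerivAt (fun s => l s * Real.sin s)
      (deriv l x * Real.sin x + l x * Real.cos x) x :=
    hdl.mul (Real.hasDerivAt_sin x)
  have h2 : HasDerivAt (fun s => ∫ t in (0:ℝ)..s, l t * Real.cos t)
      (l x * Real.cos x) x :=
    (((hl.continuous).mul Real.continuous_cos).integral_hasStrictDerivAt 0 x).hasDerivAt
  have h : HasDerivAt (fun s => l s * Real.sin s - ∫ t in (0:ℝ)..s, l t * Real.cos t) _ x := h1.sub h2
  simpa [γ, F] using h

lemma hd2 {l : ℝ → ℝ} (hl : ContDiff ℝ 2 l) (x : ℝ) :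
    HasDerivAt (fun s => (γ l s).2) (deriv l x * Real.cos x) x := by
  have hdl : HasDerivAt l (deriv l x) x :=
    (hl.differentiable (by norm_num)).differentiableAt.hasDerivAt
  have h1 : HasDerivAt (fun s => l s * Real.cos s)
      (deriv l x * Real.cos x + l x * -Real.sin x) x :=
    hdl.mul (Real.hasDerivAt_cos x)
  have h2 : HasDerivAt (fun s => ∫ t in (0:ℝ)..s, l t * Real.sin t)
      (l x * Real.sin x) x :=
    (((hl.continuous).mul Real.continuous_sin).integral_hasStrictDerivAt 0 x).hasDerivAt
  have h3 : HasDerivAt (fun s => l s * Real.cos s + ∫ t in (0:ℝ)..s, l t * Real.sin t)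
      (deriv l x * Real.cos x) x := by
    have h : HasDerivAt (fun s => l s * Real.cos s + ∫ t in (0:ℝ)..s, l t * Real.sin t) _ x := h1.add h2; convert h using 1; ring
  simpa [γ, F] using h3

theorem stmt_6 (l : ℝ → ℝ) (hl : ContDiff ℝ 2 l) (ψ : ℝ) :
    (deriv (fun s => (γ l s).1) ψ * deriv (deriv (fun s => (γ l s).2)) ψ -
      deriv (fun s => (γ l s).2) ψ * deriv (deriv (fun s => (γ l s).1)) ψ) =
      -(deriv l ψ) ^ 2 ∧
    (0 < deriv l ψ →
      |deriv (fun s => (γ l s).1) ψ * deriv (deriv (fun s => (γ l s).2)) ψ -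
        deriv (fun s => (γ l s).2) ψ * deriv (deriv (fun s => (γ l s).1)) ψ| /
        (Real.sqrt ((deriv (fun s => (γ l s).1) ψ) ^ 2 +
          (deriv (fun s => (γ l s).2) ψ) ^ 2)) ^ 3 = 1 / deriv l ψ) := by
  have e1 : deriv (fun s => (γ l s).1) = fun s => deriv l s * Real.sin s :=
    funext fun x => (hd1 hl x).deriv
  have e2 : deriv (fun s => (γ l s).2) = fun s => deriv l s * Real.cos s :=
    funext fun x => (hd2 hl x).deriv
  have hdl' : HasDerivAt (deriv l) (deriv (deriv l) ψ) ψ := by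
    have h2 : ContDiff ℝ (1 + 1) l := by exact_mod_cast hl
    have : ContDiff ℝ 1 (deriv l) := (contDiff_succ_iff_deriv.mp h2).2.2
    exact (this.differentiable (by norm_num)).differentiableAt.hasDerivAt
  have hdd2 : deriv (deriv (fun s => (γ l s).2)) ψ
      = deriv (deriv l) ψ * Real.cos ψ + deriv l ψ * -Real.sin ψ := by
    rw [e2]; exact (hdl'.mul (Real.hasDerivAt_cos ψ)).deriv
  have hdd1 : deriv (deriv (fun s => (γ l s).1)) ψ
      = deriv (deriv l) ψ * Real.sin ψ + deriv l ψ * Real.cos ψ := by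
    rw [e1]; exact (hdl'.mul (Real.hasDerivAt_sin ψ)).deriv
  have key : (deriv (fun s => (γ l s).1) ψ * deriv (deriv (fun s => (γ l s).2)) ψ -
      deriv (fun s => (γ l s).2) ψ * deriv (deriv (fun s => (γ l s).1)) ψ) =
      -(deriv l ψ) ^ 2 := by
    rw [hdd1, hdd2, e1, e2]
    ring_nf
    nlinarith [Real.sin_sq_add_cos_sq ψ]
  refine ⟨key, fun hpos => ?_⟩
  rw [key, e1, e2]
  have hs : Real.sqrt ((deriv l ψ * Real.sin ψ) ^ 2 + (deriv l ψ * Real.cos ψ) ^ 2)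
      = deriv l ψ := by
    rw [show (deriv l ψ * Real.sin ψ) ^ 2 + (deriv l ψ * Real.cos ψ) ^ 2
        = (deriv l ψ)^2 by nlinarith [Real.sin_sq_add_cos_sq ψ]]
    exact Real.sqrt_sq hpos.le
  rw [hs, abs_neg, abs_pow, abs_of_pos hpos]
  field_simp
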